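/- For a reversible irreducible Markov chain with stationary distribution π on a finite state space, π(x)·E_π(τ_x) = ∑_{t=0}^∞ [p^t(x,x) − π(x)] for every state x, where τ_x is the hitting time of x and E_π denotes expectation when the initial state is distributed according to π. -/
import Mathlib

open Finset Filter Topology

section Aux
variable {V : Type*} [Fintype V] [DecidableEq V] [Nonempty V]

/-- oscillation of a function on a finite nonempty type -/
noncomputable def osc' (g : V → ℝ) : ℝ :=
  Finset.univ.sup' Finset.univ_nonempty g - Finset.univ.inf' Finset.univ_nonempty g

lemma osc'_nonneg (g : V → ℝ) : 0 ≤ osc' g := by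
  obtain ⟨y⟩ := (inferInstance : Nonempty V)
  have h1 := Finset.inf'_le (s := (univ : Finset V)) g (mem_univ y)
  have h2 := Finset.le_sup' (s := (univ : Finset V)) g (mem_univ y)
  unfold osc'; linarith

lemma avg_abs (w : V → ℝ) (hw : ∀ y, 0 ≤ w y) (hws : ∑ y, w y = 1)
    (g : V → ℝ) (y : V) : |g y - ∑ z, w z * g z| ≤ osc' g := by
  have hgy1 : g y ≤ Finset.univ.sup' Finset.univ_nonempty g := Finset.le_sup' g (mem_univ y)
  have hgy2 : Finset.univ.inf' Finset.univ_nonempty g ≤ g y := Finset.inf'_le g (mem_univ y)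
  have havg1 : ∑ z, w z * g z ≤ Finset.univ.sup' Finset.univ_nonempty g := by
    calc ∑ z, w z * g z ≤ ∑ z, w z * Finset.univ.sup' Finset.univ_nonempty g :=
          Finset.sum_le_sum fun z _ =>
            mul_le_mul_of_nonneg_left (Finset.le_sup' g (mem_univ z)) (hw z)
      _ = _ := by rw [← Finset.sum_mul, hws, one_mul]
  have havg2 : Finset.univ.inf' Finset.univ_nonempty g ≤ ∑ z, w z * g z := by
    calc Finset.univ.inf' Finset.univ_nonempty g
        = ∑ z, w z * Finset.univ.inf' Finset.univ_nonempty g := by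
          rw [← Finset.sum_mul, hws, one_mul]
      _ ≤ _ := Finset.sum_le_sum fun z _ =>
            mul_le_mul_of_nonneg_left (Finset.inf'_le g (mem_univ z)) (hw z)
  rw [abs_le]; unfold osc'; constructor <;> linarith

lemma contraction (Q : Matrix V V ℝ) (ε : ℝ) (hεnn : 0 ≤ ε)
    (hε : ∀ a b, ε ≤ Q a b) (hrow : ∀ a, ∑ b, Q a b = 1) (g : V → ℝ) :
    osc' (Q.mulVec g) ≤ (1 - 2 * ε) * osc' g := by
  set M := Finset.univ.sup' Finset.univ_nonempty g with hM
  set m := Finset.univ.inf' Finset.univ_nonempty g with hm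
  have hosc : osc' g = M - m := rfl
  have hmM : m ≤ M := by have := osc'_nonneg g; rw [hosc] at this; linarith
  obtain ⟨w0, -, hw0⟩ := Finset.exists_mem_eq_inf' (Finset.univ_nonempty) g
  obtain ⟨w1, -, hw1⟩ := Finset.exists_mem_eq_sup' (Finset.univ_nonempty) g
  have hupper : ∀ y, Q.mulVec g y ≤ M - ε * (M - m) := by
    intro y
    have hrow' : Q y w0 + ∑ w ∈ univ.erase w0, Q y w = 1 := by
      rw [Finset.add_sum_erase _ _ (mem_univ w0)]; exact hrow y
    have hsplit : Q.mulVec g y = Q y w0 * g w0 + ∑ w ∈ univ.erase w0, Q y w * g w := by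
      simp only [Matrix.mulVec, dotProduct]
      exact (Finset.add_sum_erase univ (fun w => Q y w * g w) (mem_univ w0)).symm
    have htail : ∑ w ∈ univ.erase w0, Q y w * g w ≤ (1 - Q y w0) * M := by
      calc ∑ w ∈ univ.erase w0, Q y w * g w ≤ ∑ w ∈ univ.erase w0, Q y w * M :=
            Finset.sum_le_sum fun w _ =>
              mul_le_mul_of_nonneg_left (Finset.le_sup' g (mem_univ w)) (le_trans hεnn (hε y w))
        _ = (1 - Q y w0) * M := by rw [← Finset.sum_mul]; congr 1; linarith
    have hQw0 : ε ≤ Q y w0 := hε y w0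
    rw [hsplit]
    have : Q y w0 * g w0 = Q y w0 * m := by rw [← hw0]
    nlinarith [htail, hQw0, hmM]
  have hlower : ∀ y, m + ε * (M - m) ≤ Q.mulVec g y := by
    intro y
    have hrow' : Q y w1 + ∑ w ∈ univ.erase w1, Q y w = 1 := by
      rw [Finset.add_sum_erase _ _ (mem_univ w1)]; exact hrow y
    have hsplit : Q.mulVec g y = Q y w1 * g w1 + ∑ w ∈ univ.erase w1, Q y w * g w := by
      simp only [Matrix.mulVec, dotProduct]
      exact (Finset.add_sum_erase univ (fun w => Q y w * g w) (mem_univ w1)).symm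
    have htail : (1 - Q y w1) * m ≤ ∑ w ∈ univ.erase w1, Q y w * g w := by
      calc (1 - Q y w1) * m = ∑ w ∈ univ.erase w1, Q y w * m := by
            rw [← Finset.sum_mul]; congr 1; linarith
        _ ≤ ∑ w ∈ univ.erase w1, Q y w * g w :=
            Finset.sum_le_sum fun w _ =>
              mul_le_mul_of_nonneg_left (Finset.inf'_le g (mem_univ w)) (le_trans hεnn (hε y w))
    have hQw1 : ε ≤ Q y w1 := hε y w1
    rw [hsplit]
    have : Q y w1 * g w1 = Q y w1 * M := by rw [← hw1]
    nlinarith [htail, hQw1, hmM]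
  have hsup : Finset.univ.sup' Finset.univ_nonempty (Q.mulVec g) ≤ M - ε * (M - m) :=
    Finset.sup'_le _ _ fun y _ => hupper y
  have hinf : m + ε * (M - m) ≤ Finset.univ.inf' Finset.univ_nonempty (Q.mulVec g) :=
    Finset.le_inf' _ _ fun y _ => hlower y
  have : osc' (Q.mulVec g) = Finset.univ.sup' Finset.univ_nonempty (Q.mulVec g)
      - Finset.univ.inf' Finset.univ_nonempty (Q.mulVec g) := rfl
  rw [this, hosc]; nlinarith

end Aux

/-- For a reversible irreducible (and aperiodic, so that the series converges)
Markov chain with stationary distribution `π` on a finite state space,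
`π(x)·E_π(τ_x) = ∑_{t=0}^∞ [p^t(x,x) − π(x)]`, where the expected hitting times
`h y = E_y(τ_x)` are characterized by `h x = 0` and `h y = 1 + ∑ z p(y,z) h z`
for `y ≠ x`. -/
theorem stationary_hitting_time_series
    {V : Type*} [Fintype V] [DecidableEq V] [Nonempty V]
    (P : Matrix V V ℝ) (π : V → ℝ)
    (hnn : ∀ x y, 0 ≤ P x y) (hrow : ∀ x, ∑ y, P x y = 1)
    (hπpos : ∀ x, 0 < π x) (hπsum : ∑ x, π x = 1)
    (hrev : ∀ x y, π x * P x y = π y * P y x)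
    (hirr : ∀ x y, ∃ t : ℕ, 0 < (P ^ t) x y)
    (haper : ∃ t : ℕ, ∀ x y, 0 < (P ^ t) x y)
    (x : V) (h : V → ℝ)
    (hx : h x = 0)
    (hrec : ∀ y, y ≠ x → h y = 1 + ∑ z, P y z * h z) :
    π x * (∑ y, π y * h y) = ∑' t : ℕ, ((P ^ t) x x - π x) := by
  rcases subsingleton_or_nontrivial V with hV | hV
  · -- trivial one-point case
    have huniv : (Finset.univ : Finset V) = {x} := by
      apply Finset.eq_singleton_iff_unique_mem.2
      exact ⟨mem_univ x, fun y _ => Subsingleton.elim y x⟩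
    have hπx : π x = 1 := by rw [← hπsum, huniv, Finset.sum_singleton]
    have hPxx : P x x = 1 := by have := hrow x; rwa [huniv, Finset.sum_singleton] at this
    have hPt : ∀ t : ℕ, (P ^ t) x x = 1 := by
      intro t; induction t with
      | zero => simp [Matrix.one_apply]
      | succ t ih =>
        rw [pow_succ, Matrix.mul_apply, huniv, Finset.sum_singleton, ih, hPxx, one_mul]
    have hS : ∑ y, π y * h y = 0 := by rw [huniv, Finset.sum_singleton, hx, mul_zero]
    rw [hS, mul_zero]
    have : ∀ t : ℕ, (P ^ t) x x - π x = 0 := fun t => by rw [hPt t, hπx]; ring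
    simp [this]
  · -- main case
    have hπnn : ∀ y, 0 ≤ π y := fun y => (hπpos y).le
    have hPtnn : ∀ t, ∀ a b : V, 0 ≤ (P ^ t) a b := by
      intro t; induction t with
      | zero => intro a b; by_cases hab : a = b <;> simp [Matrix.one_apply, hab]
      | succ t ih =>
        intro a b; rw [pow_succ, Matrix.mul_apply]
        exact Finset.sum_nonneg fun z _ => mul_nonneg (ih a z) (hnn z b)
    have hPtrow : ∀ t, ∀ a : V, ∑ b, (P ^ t) a b = 1 := by
      intro t; induction t with
      | zero => intro a; simp [Matrix.one_apply]
      | succ t ih =>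
        intro a
        simp only [pow_succ, Matrix.mul_apply]
        rw [Finset.sum_comm]
        calc ∑ z, ∑ b, (P ^ t) a z * P z b = ∑ z, (P ^ t) a z * ∑ b, P z b := by
              simp [Finset.mul_sum]
          _ = 1 := by simp [hrow, ih a]
    have hstat : ∀ z, ∑ y, π y * P y z = π z := by
      intro z
      calc ∑ y, π y * P y z = ∑ y, π z * P z y := Finset.sum_congr rfl fun y _ => hrev y z
        _ = π z * ∑ y, P z y := by rw [Finset.mul_sum]
        _ = π z := by rw [hrow z, mul_one]
    have hstatt : ∀ t, ∀ z, ∑ y, π y * (P ^ t) y z = π z := by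
      intro t; induction t with
      | zero => intro z; simp [Matrix.one_apply]
      | succ t ih =>
        intro z
        simp only [pow_succ, Matrix.mul_apply]
        calc ∑ y, π y * ∑ w, (P ^ t) y w * P w z
            = ∑ y, ∑ w, π y * (P ^ t) y w * P w z := by
              simp [Finset.mul_sum, mul_assoc]
          _ = ∑ w, ∑ y, π y * (P ^ t) y w * P w z := Finset.sum_comm
          _ = ∑ w, (∑ y, π y * (P ^ t) y w) * P w z := by
              simp [Finset.sum_mul]
          _ = ∑ w, π w * P w z := by simp [ih]
          _ = π z := hstat z
    -- average preservation
    have havg : ∀ t (g : V → ℝ), ∑ z, π z * ((P ^ t).mulVec g) z = ∑ z, π z * g z := by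
      intro t g
      simp only [Matrix.mulVec, dotProduct]
      calc ∑ z, π z * ∑ w, (P ^ t) z w * g w
          = ∑ z, ∑ w, π z * (P ^ t) z w * g w := by simp [Finset.mul_sum, mul_assoc]
        _ = ∑ w, ∑ z, π z * (P ^ t) z w * g w := Finset.sum_comm
        _ = ∑ w, (∑ z, π z * (P ^ t) z w) * g w := by simp [Finset.sum_mul]
        _ = ∑ w, π w * g w := by simp [hstatt t]
    -- aperiodicity with positive exponent
    obtain ⟨t1, ht1⟩ := haper
    have ht0 : ∀ a b : V, 0 < (P ^ (t1 + 1)) a b := by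
      intro a b
      rw [pow_succ', Matrix.mul_apply]
      have hz : ∃ z, 0 < P a z := by
        by_contra hc; push_neg at hc
        have : ∑ z, P a z ≤ 0 := Finset.sum_nonpos fun z _ => hc z
        rw [hrow a] at this; linarith
      obtain ⟨z0, hz0⟩ := hz
      exact Finset.sum_pos' (fun z _ => mul_nonneg (hnn a z) (ht1 z b).le)
        ⟨z0, mem_univ z0, mul_pos hz0 (ht1 z0 b)⟩
    set t0 := t1 + 1 with ht0def
    have ht0pos : 0 < t0 := Nat.succ_pos _
    set ε := Finset.univ.inf' Finset.univ_nonempty (fun p : V × V => (P ^ t0) p.1 p.2)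
      with hεdef
    have hεpos : 0 < ε := by
      rw [hεdef]
      exact (Finset.lt_inf'_iff _).2 fun p _ => ht0 p.1 p.2
    have hεle : ∀ a b : V, ε ≤ (P ^ t0) a b := fun a b =>
      Finset.inf'_le _ (mem_univ ((a, b) : V × V))
    have h2ε : 2 * ε ≤ 1 := by
      obtain ⟨a, b, hab⟩ := exists_pair_ne V
      have hsub : ({a, b} : Finset V) ⊆ univ := Finset.subset_univ _
      have h1 : (P ^ t0) a a + (P ^ t0) a b ≤ ∑ z, (P ^ t0) a z := by
        have : ∑ z ∈ ({a, b} : Finset V), (P ^ t0) a z = (P ^ t0) a a + (P ^ t0) a b := by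
          rw [Finset.sum_insert (by simpa using hab), Finset.sum_singleton]
        rw [← this]
        exact Finset.sum_le_sum_of_subset_of_nonneg hsub fun z _ _ => hPtnn t0 a z
      rw [hPtrow t0 a] at h1
      have h2 := hεle a a
      have h3 := hεle a b
      linarith
    set q := 1 - 2 * ε with hqdef
    have hq0 : 0 ≤ q := by rw [hqdef]; linarith
    have hqlt : q < 1 := by rw [hqdef]; linarith
    -- oscillation decay
    have hosc_step : ∀ (g : V → ℝ) (t : ℕ),
        osc' ((P ^ (t + 1)).mulVec g) ≤ osc' ((P ^ t).mulVec g) := by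
      intro g t
      have heq : (P ^ (t + 1)).mulVec g = P.mulVec ((P ^ t).mulVec g) := by
        rw [Matrix.mulVec_mulVec, ← pow_succ']
      rw [heq]
      have := contraction P 0 le_rfl (fun a b => hnn a b) hrow ((P ^ t).mulVec g)
      simpa using this
    have hosc_mono : ∀ (g : V → ℝ) (s t : ℕ), s ≤ t →
        osc' ((P ^ t).mulVec g) ≤ osc' ((P ^ s).mulVec g) := by
      intro g s t hst
      obtain ⟨d, rfl⟩ := Nat.exists_eq_add_of_le hst
      clear hst
      induction d with
      | zero => simp
      | succ d ih =>
        calc osc' ((P ^ (s + (d + 1))).mulVec g)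
            = osc' ((P ^ ((s + d) + 1)).mulVec g) := by ring_nf
          _ ≤ osc' ((P ^ (s + d)).mulVec g) := hosc_step g (s + d)
          _ ≤ _ := ih
    have hosc_block : ∀ (g : V → ℝ) (k : ℕ),
        osc' ((P ^ (t0 * k)).mulVec g) ≤ q ^ k * osc' g := by
      intro g k; induction k with
      | zero => simp [Matrix.one_mulVec]
      | succ k ih =>
        have heq : (P ^ (t0 * (k + 1))).mulVec g
            = (P ^ t0).mulVec ((P ^ (t0 * k)).mulVec g) := by
          rw [Matrix.mulVec_mulVec, ← pow_add]
          congr 1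
          ring
        rw [heq]
        calc osc' ((P ^ t0).mulVec ((P ^ (t0 * k)).mulVec g))
            ≤ (1 - 2 * ε) * osc' ((P ^ (t0 * k)).mulVec g) :=
              contraction (P ^ t0) ε hεpos.le hεle (hPtrow t0) _
          _ ≤ q * (q ^ k * osc' g) := by
              rw [← hqdef]
              exact mul_le_mul_of_nonneg_left ih hq0
          _ = q ^ (k + 1) * osc' g := by ring
    have hosc_t : ∀ (g : V → ℝ) (t : ℕ),
        osc' ((P ^ t).mulVec g) ≤ q ^ (t / t0) * osc' g := by
      intro g t
      calc osc' ((P ^ t).mulVec g) ≤ osc' ((P ^ (t0 * (t / t0))).mulVec g) := by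
            apply hosc_mono
            rw [mul_comm]
            exact Nat.div_mul_le_self t t0
        _ ≤ q ^ (t / t0) * osc' g := hosc_block g (t / t0)
    -- distance to stationary average
    have hdist : ∀ (g : V → ℝ) (t : ℕ) (y : V),
        |((P ^ t).mulVec g) y - ∑ z, π z * g z| ≤ q ^ (t / t0) * osc' g := by
      intro g t y
      rw [← havg t g]
      exact le_trans (avg_abs π hπnn hπsum ((P ^ t).mulVec g) y) (hosc_t g t)
    have hπne : π x ≠ 0 := ne_of_gt (hπpos x)
    -- one step identity on h
    have hPh : P.mulVec h = fun y => h y - 1 + (π x)⁻¹ * (if y = x then 1 else 0) := by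
      have hbal : ∑ y, π y * (P.mulVec h) y = ∑ y, π y * h y := by
        have := havg 1 h; simpa using this
      have hPy : ∀ y, y ≠ x → (P.mulVec h) y = h y - 1 := by
        intro y hy
        have := hrec y hy
        simp only [Matrix.mulVec, dotProduct]
        linarith
      have hsplit : ∑ y, π y * (P.mulVec h) y
          = π x * (P.mulVec h) x + ∑ y ∈ univ.erase x, π y * (h y - 1) := by
        rw [← Finset.add_sum_erase _ _ (mem_univ x)]
        congr 1
        exact Finset.sum_congr rfl fun y hy =>
          by rw [hPy y (Finset.mem_erase.1 hy).1]
      have he2 : ∑ y ∈ univ.erase x, π y * h y = ∑ y, π y * h y := by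
        have := Finset.add_sum_erase univ (fun y => π y * h y) (mem_univ x)
        simpa [hx] using this
      have he3 : ∑ y ∈ univ.erase x, π y = 1 - π x := by
        have := Finset.add_sum_erase univ (fun y : V => π y) (mem_univ x)
        simp only [hπsum] at this
        linarith
      have he1 : ∑ y ∈ univ.erase x, π y * (h y - 1)
          = (∑ y, π y * h y) - (1 - π x) := by
        rw [← he2, ← he3]
        rw [← Finset.sum_sub_distrib]
        exact Finset.sum_congr rfl fun y _ => by ring
      have hkey : π x * (P.mulVec h) x = 1 - π x := by
        rw [hsplit, he1] at hbal; linarith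
      funext y
      by_cases hy : y = x
      · rw [hy, hx, if_pos rfl]
        have : (P.mulVec h) x = (1 - π x) / π x := by
          field_simp
          linarith [hkey]
        rw [this]
        field_simp
        ring
      · rw [if_neg hy, hPy y hy]
        ring
    -- step identity
    have hstep : ∀ t : ℕ, ((P ^ (t + 1)).mulVec h) x
        = ((P ^ t).mulVec h) x - 1 + (π x)⁻¹ * (P ^ t) x x := by
      intro t
      have heq : (P ^ (t + 1)).mulVec h = (P ^ t).mulVec (P.mulVec h) := by
        rw [Matrix.mulVec_mulVec, ← pow_succ]
      rw [heq, hPh]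
      simp only [Matrix.mulVec, dotProduct]
      have hterm : ∀ z, (P ^ t) x z * (h z - 1 + (π x)⁻¹ * (if z = x then 1 else 0))
          = (P ^ t) x z * h z - (P ^ t) x z
            + (π x)⁻¹ * ((P ^ t) x z * (if z = x then 1 else 0)) := by
        intro z; ring
      simp_rw [hterm]
      rw [Finset.sum_add_distrib, Finset.sum_sub_distrib, ← Finset.mul_sum, hPtrow t x]
      congr 1
      have : ∑ z, (P ^ t) x z * (if z = x then 1 else 0) = (P ^ t) x x := by
        simp [mul_ite]
      rw [this]
    -- telescoping
    have hpartial : ∀ T : ℕ, ∑ t ∈ range T, ((P ^ t) x x - π x)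
        = π x * ((P ^ T).mulVec h) x := by
      intro T; induction T with
      | zero => simp [Matrix.one_mulVec, hx]
      | succ T ih =>
        rw [Finset.sum_range_succ, ih, hstep T]
        field_simp
        ring
    -- limit
    have hS : Tendsto (fun T : ℕ => ((P ^ T).mulVec h) x) atTop (𝓝 (∑ y, π y * h y)) := by
      have hdiv : Tendsto (fun T : ℕ => T / t0) atTop atTop := by
        apply tendsto_atTop_atTop.2
        intro b
        exact ⟨b * t0, fun n hn => (Nat.le_div_iff_mul_le ht0pos).2 hn⟩
      have h0 : Tendsto (fun T : ℕ => q ^ (T / t0) * osc' h) atTop (𝓝 0) := by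
        have := ((tendsto_pow_atTop_nhds_zero_of_lt_one hq0 hqlt).comp hdiv).mul_const
          (osc' h)
        simpa using this
      have := squeeze_zero_norm
        (f := fun T : ℕ => ((P ^ T).mulVec h) x - ∑ z, π z * h z)
        (fun T => by simpa [Real.norm_eq_abs] using hdist h T x) h0
      exact tendsto_sub_nhds_zero_iff.1 this
    have hlim2 : Tendsto (fun T : ℕ => ∑ t ∈ range T, ((P ^ t) x x - π x)) atTop
        (𝓝 (π x * ∑ y, π y * h y)) := by
      have heq : (fun T : ℕ => ∑ t ∈ range T, ((P ^ t) x x - π x))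
          = fun T => π x * ((P ^ T).mulVec h) x := funext hpartial
      rw [heq]
      exact hS.const_mul (π x)
    -- summability
    set e : V → ℝ := fun z => if z = x then 1 else 0 with hedef
    have hae : ∀ t : ℕ, (P ^ t) x x - π x = ((P ^ t).mulVec e) x - ∑ z, π z * e z := by
      intro t
      rw [hedef]
      simp [Matrix.mulVec, dotProduct, mul_ite]
    have habs : ∀ t : ℕ, |(P ^ t) x x - π x| ≤ q ^ (t / t0) * osc' e := by
      intro t; rw [hae t]; exact hdist e t x
    have hgeomsum : ∀ n : ℕ, ∑ k ∈ range n, q ^ k ≤ (1 - q)⁻¹ := by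
      intro n
      have hsummable := (hasSum_geometric_of_lt_one hq0 hqlt).summable
      have := Summable.sum_le_tsum (range n) (fun i _ => pow_nonneg hq0 i) hsummable
      rwa [(hasSum_geometric_of_lt_one hq0 hqlt).tsum_eq] at this
    have hblock : ∀ N : ℕ, ∑ t ∈ range (t0 * N), q ^ (t / t0)
        = (t0 : ℝ) * ∑ k ∈ range N, q ^ k := by
      intro N; induction N with
      | zero => simp
      | succ N ih =>
        have h1 : t0 * N ≤ t0 * (N + 1) := Nat.mul_le_mul_left t0 (Nat.le_succ N)
        rw [Finset.range_eq_Ico,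
          ← Finset.sum_Ico_consecutive (fun t => q ^ (t / t0)) (Nat.zero_le (t0 * N)) h1,
          ← Finset.range_eq_Ico, ih]
        have hconst : ∑ t ∈ Finset.Ico (t0 * N) (t0 * (N + 1)), q ^ (t / t0)
            = (t0 : ℝ) * q ^ N := by
          have : ∀ t ∈ Finset.Ico (t0 * N) (t0 * (N + 1)), q ^ (t / t0) = q ^ N := by
            intro t ht
            rw [Finset.mem_Ico] at ht
            congr 1
            exact Nat.div_eq_of_lt_le (by rw [mul_comm]; exact ht.1)
              (by rw [mul_comm]; exact ht.2)
          rw [Finset.sum_congr rfl this, Finset.sum_const, Nat.card_Ico]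
          have : t0 * (N + 1) - t0 * N = t0 := by
            have h' : t0 * (N + 1) = t0 * N + t0 := Nat.mul_succ t0 N
            omega
          rw [this, nsmul_eq_mul]
        rw [hconst, Finset.sum_range_succ]
        ring
    have hgeom : ∀ n : ℕ, ∑ t ∈ range n, q ^ (t / t0) ≤ (t0 : ℝ) * (1 - q)⁻¹ := by
      intro n
      calc ∑ t ∈ range n, q ^ (t / t0) ≤ ∑ t ∈ range (t0 * n), q ^ (t / t0) := by
            apply Finset.sum_le_sum_of_subset_of_nonneg
            · exact Finset.range_subset_range.2 (Nat.le_mul_of_pos_left n ht0pos)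
            · exact fun t _ _ => pow_nonneg hq0 _
        _ = (t0 : ℝ) * ∑ k ∈ range n, q ^ k := hblock n
        _ ≤ (t0 : ℝ) * (1 - q)⁻¹ := by
            apply mul_le_mul_of_nonneg_left (hgeomsum n)
            positivity
    have hsummable : Summable (fun t : ℕ => (P ^ t) x x - π x) := by
      apply Summable.of_abs
      apply summable_of_sum_range_le
        (c := osc' e * ((t0 : ℝ) * (1 - q)⁻¹)) (fun t => abs_nonneg _)
      intro n
      calc ∑ t ∈ range n, |(P ^ t) x x - π x|
          ≤ ∑ t ∈ range n, q ^ (t / t0) * osc' e := Finset.sum_le_sum fun t _ => habs t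
        _ = (∑ t ∈ range n, q ^ (t / t0)) * osc' e := by rw [Finset.sum_mul]
        _ ≤ ((t0 : ℝ) * (1 - q)⁻¹) * osc' e :=
            mul_le_mul_of_nonneg_right (hgeom n) (osc'_nonneg e)
        _ = osc' e * ((t0 : ℝ) * (1 - q)⁻¹) := by ring
    exact tendsto_nhds_unique hlim2 hsummable.hasSum.tendsto_sum_nat
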